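/- Let α ∈ (-1,1), p ∈ (1,∞), and β ∈ (-α-1, (α+1)(p-1)). Then the weight ω(y) = y^β on (0,∞) belongs to the Muckenhoupt class A_p((0,∞), μ) with respect to the measure μ(dy) = y^α dy; that is, sup over intervals I ⊂ (0,∞) of ( μ(I)^{-1} ∫_I y^β μ(dy) ) · ( μ(I)^{-1} ∫_I y^{-β/(p-1)} μ(dy) )^{p-1} is finite. -/

import Mathlib

open MeasureTheory Real Set Filter

/-- Bernoulli-type inequality: for `s ≥ 0` and `0 < v ≤ u`,
`v * (1 - s^u) ≤ u * (1 - s^v)`. -/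
private lemma bern_aux {s u v : ℝ} (hs0 : 0 ≤ s) (hv : 0 < v) (huv : v ≤ u) :
    v * (1 - s ^ u) ≤ u * (1 - s ^ v) := by
  have hu : 0 < u := hv.trans_le huv
  rcases eq_or_lt_of_le hs0 with h | h
  · simp [← h, Real.zero_rpow hu.ne', Real.zero_rpow hv.ne', huv]
  · have hr : 1 ≤ u / v := (one_le_div hv).mpr huv
    have hB := one_add_mul_self_le_rpow_one_add (s := s ^ v - 1) (by
      have := Real.rpow_nonneg hs0 v; linarith) hr
    have hEq : (1 + (s ^ v - 1)) ^ (u / v) = s ^ u := by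
      rw [add_sub_cancel, ← Real.rpow_mul hs0]
      congr 1
      field_simp
    rw [hEq] at hB
    have h2 := mul_le_mul_of_nonneg_left hB hv.le
    have expand : v * (1 + u / v * (s ^ v - 1)) = v + u * (s ^ v - 1) := by
      field_simp
    rw [expand] at h2
    linarith

/-- Ratio comparison: for `s ∈ [0,1]` and `u, v > 0`,
`(1 - s^u)/u ≤ max 1 (v/u) * ((1 - s^v)/v)`. -/
private lemma ratio_aux {s u v : ℝ} (hs0 : 0 ≤ s) (hs1 : s ≤ 1) (hu : 0 < u) (hv : 0 < v) :
    (1 - s ^ u) / u ≤ max 1 (v / u) * ((1 - s ^ v) / v) := by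
  rcases le_or_gt v u with h | h
  · have key := bern_aux hs0 hv h
    have hmax : (1:ℝ) ≤ max 1 (v / u) := le_max_left _ _
    have h1 : (1 - s ^ u) / u ≤ (1 - s ^ v) / v := by
      rw [div_le_div_iff₀ hu hv]; nlinarith [key]
    have h2 : (0:ℝ) ≤ (1 - s ^ v) / v := by
      have : s ^ v ≤ 1 := Real.rpow_le_one hs0 hs1 hv.le
      exact div_nonneg (by linarith) hv.le
    nlinarith [h1, h2, hmax]
  · have hmax : v / u ≤ max 1 (v / u) := le_max_right _ _
    have hsvu : s ^ v ≤ s ^ u := by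
      rcases eq_or_lt_of_le hs0 with h0 | h0
      · simp [← h0, Real.zero_rpow hu.ne', Real.zero_rpow hv.ne']
      · exact Real.rpow_le_rpow_of_exponent_ge h0 hs1 h.le
    have h1 : (1 - s ^ u) / u ≤ (v / u) * ((1 - s ^ v) / v) := by
      rw [div_mul_div_comm, div_le_div_iff₀ hu (by positivity)]
      nlinarith [mul_le_mul_of_nonneg_right (by linarith : 1 - s ^ u ≤ 1 - s ^ v)
        (mul_pos hu hv).le]
    have h2 : (0:ℝ) ≤ (1 - s ^ v) / v := by
      have : s ^ v ≤ 1 := Real.rpow_le_one hs0 hs1 hv.le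
      exact div_nonneg (by linarith) hv.le
    nlinarith [h1, h2, hmax]

/-- Integral of `y^c` over `Ioo a b`. -/
private lemma int_rpow_aux {c a b : ℝ} (hc : -1 < c) (hab : a ≤ b) :
    ∫ y in Set.Ioo a b, y ^ c = (b ^ (c + 1) - a ^ (c + 1)) / (c + 1) := by
  rw [← MeasureTheory.integral_Ioc_eq_integral_Ioo, ← intervalIntegral.integral_of_le hab,
    integral_rpow (Or.inl hc)]

/-- The key single-factor estimate. -/
private lemma factor_aux {c d a b : ℝ} (hc : 0 < c) (hd : 0 < d) (ha : 0 ≤ a) (hab : a < b) :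
    ((b ^ c - a ^ c) / c) / ((b ^ d - a ^ d) / d) ≤ max 1 (d / c) * b ^ (c - d) := by
  have hb : 0 < b := ha.trans_lt hab
  set s : ℝ := a / b with hs
  have hs0 : 0 ≤ s := by positivity
  have hs1 : s ≤ 1 := by rw [hs, div_le_one hb]; exact hab.le
  have hac : a ^ c = s ^ c * b ^ c := by
    rw [hs, Real.div_rpow ha hb.le]; field_simp
  have had : a ^ d = s ^ d * b ^ d := by
    rw [hs, Real.div_rpow ha hb.le]; field_simp
  have hY : 0 < (b ^ d - a ^ d) / d := by
    have : a ^ d < b ^ d := Real.rpow_lt_rpow ha hab hd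
    exact div_pos (by linarith) hd
  rw [div_le_iff₀ hY]
  have key := ratio_aux hs0 hs1 hc hd
  have hbc : (0:ℝ) < b ^ c := Real.rpow_pos_of_pos hb c
  have hbd : (0:ℝ) < b ^ d := Real.rpow_pos_of_pos hb d
  have hbcd : b ^ (c - d) = b ^ c / b ^ d := Real.rpow_sub hb c d
  have hmul := mul_le_mul_of_nonneg_left key hbc.le
  calc (b ^ c - a ^ c) / c = b ^ c * ((1 - s ^ c) / c) := by rw [hac]; ring
    _ ≤ b ^ c * (max 1 (d / c) * ((1 - s ^ d) / d)) := hmul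
    _ = max 1 (d / c) * b ^ (c - d) * ((b ^ d - a ^ d) / d) := by
        rw [had, hbcd]; field_simp

/-- the power weight `y^β` belongs to the Muckenhoupt class
`A_p((0,∞), μ)` with `μ(dy) = y^α dy`, when `β ∈ (-α-1, (α+1)(p-1))`: the
`A_p` product over all intervals `I = (a,b) ⊂ (0,∞)` is uniformly bounded. -/
theorem power_weight_Ap (α p β : ℝ) (hα : α ∈ Set.Ioo (-1 : ℝ) 1) (hp : 1 < p)
    (hβ : β ∈ Set.Ioo (-α - 1) ((α + 1) * (p - 1))) :
    ∃ C : ℝ, ∀ a b : ℝ, 0 ≤ a → a < b →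
      ((∫ y in Set.Ioo a b, y ^ β * y ^ α) / (∫ y in Set.Ioo a b, y ^ α)) *
        ((∫ y in Set.Ioo a b, y ^ (-(β / (p - 1))) * y ^ α) /
          (∫ y in Set.Ioo a b, y ^ α)) ^ (p - 1) ≤ C := by
  obtain ⟨hα1, hα2⟩ := hα
  obtain ⟨hβ1, hβ2⟩ := hβ
  have hq : 0 < p - 1 := by linarith
  have hc0 : (0:ℝ) < α + 1 := by linarith
  have hc1 : (0:ℝ) < β + α + 1 := by linarith
  have hc2 : (0:ℝ) < -(β / (p - 1)) + α + 1 := by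
    have : β / (p - 1) < α + 1 := (div_lt_iff₀ hq).mpr (by linarith)
    linarith
  refine ⟨max 1 ((α + 1) / (β + α + 1)) *
      (max 1 ((α + 1) / (-(β / (p - 1)) + α + 1))) ^ (p - 1), ?_⟩
  intro a b ha hab
  have hb : 0 < b := ha.trans_lt hab
  -- rewrite the three integrals
  have e0 : ∫ y in Set.Ioo a b, y ^ α = (b ^ (α + 1) - a ^ (α + 1)) / (α + 1) :=
    int_rpow_aux hα1 hab.le
  have e1 : ∫ y in Set.Ioo a b, y ^ β * y ^ α
      = (b ^ (β + α + 1) - a ^ (β + α + 1)) / (β + α + 1) := by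
    rw [MeasureTheory.setIntegral_congr_fun measurableSet_Ioo
      (g := fun y => y ^ (β + α)) (fun y hy => (Real.rpow_add (ha.trans_lt hy.1) β α).symm)]
    rw [int_rpow_aux (by linarith) hab.le]
  have e2 : ∫ y in Set.Ioo a b, y ^ (-(β / (p - 1))) * y ^ α
      = (b ^ (-(β / (p - 1)) + α + 1) - a ^ (-(β / (p - 1)) + α + 1)) / (-(β / (p - 1)) + α + 1) := by
    rw [MeasureTheory.setIntegral_congr_fun measurableSet_Ioo
      (g := fun y => y ^ (-(β / (p - 1)) + α))
      (fun y hy => (Real.rpow_add (ha.trans_lt hy.1) _ α).symm)]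
    rw [int_rpow_aux (by linarith) hab.le]
  rw [e0, e1, e2]
  have f1 := factor_aux hc1 hc0 ha hab
  have f2 := factor_aux hc2 hc0 ha hab
  have hI0 : 0 < (b ^ (α + 1) - a ^ (α + 1)) / (α + 1) := by
    have : a ^ (α + 1) < b ^ (α + 1) := Real.rpow_lt_rpow ha hab hc0
    exact div_pos (by linarith) hc0
  have hR1nn : 0 ≤ ((b ^ (β + α + 1) - a ^ (β + α + 1)) / (β + α + 1)) /
      ((b ^ (α + 1) - a ^ (α + 1)) / (α + 1)) := by
    have : a ^ (β + α + 1) < b ^ (β + α + 1) := Real.rpow_lt_rpow ha hab hc1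
    exact div_nonneg (div_nonneg (by linarith) hc1.le) hI0.le
  have hR2nn : 0 ≤ ((b ^ (-(β / (p - 1)) + α + 1) - a ^ (-(β / (p - 1)) + α + 1)) /
      (-(β / (p - 1)) + α + 1)) / ((b ^ (α + 1) - a ^ (α + 1)) / (α + 1)) := by
    have : a ^ (-(β / (p - 1)) + α + 1) < b ^ (-(β / (p - 1)) + α + 1) :=
      Real.rpow_lt_rpow ha hab hc2
    exact div_nonneg (div_nonneg (by linarith) hc2.le) hI0.le
  -- simplify the exponents in the factor bounds
  have f1' : ((b ^ (β + α + 1) - a ^ (β + α + 1)) / (β + α + 1)) /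
      ((b ^ (α + 1) - a ^ (α + 1)) / (α + 1))
      ≤ max 1 ((α + 1) / (β + α + 1)) * b ^ β := by
    have : β + α + 1 - (α + 1) = β := by ring
    rwa [this] at f1
  have f2' : ((b ^ (-(β / (p - 1)) + α + 1) - a ^ (-(β / (p - 1)) + α + 1)) /
      (-(β / (p - 1)) + α + 1)) / ((b ^ (α + 1) - a ^ (α + 1)) / (α + 1))
      ≤ max 1 ((α + 1) / (-(β / (p - 1)) + α + 1)) * b ^ (-(β / (p - 1))) := by
    have : -(β / (p - 1)) + α + 1 - (α + 1) = -(β / (p - 1)) := by ring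
    rwa [this] at f2
  set M1 := max 1 ((α + 1) / (β + α + 1)) with hM1
  set M2 := max 1 ((α + 1) / (-(β / (p - 1)) + α + 1)) with hM2
  have hM1nn : (0:ℝ) ≤ M1 := le_trans zero_le_one (le_max_left _ _)
  have hM2nn : (0:ℝ) ≤ M2 := le_trans zero_le_one (le_max_left _ _)
  have hbβ : (0:ℝ) ≤ b ^ β := Real.rpow_nonneg hb.le β
  have hstep2 : (((b ^ (-(β / (p - 1)) + α + 1) - a ^ (-(β / (p - 1)) + α + 1)) /
      (-(β / (p - 1)) + α + 1)) / ((b ^ (α + 1) - a ^ (α + 1)) / (α + 1))) ^ (p - 1)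
      ≤ (M2 * b ^ (-(β / (p - 1)))) ^ (p - 1) :=
    Real.rpow_le_rpow hR2nn f2' hq.le
  have hexp : (M2 * b ^ (-(β / (p - 1)))) ^ (p - 1) = M2 ^ (p - 1) * b ^ (-β) := by
    rw [Real.mul_rpow hM2nn (Real.rpow_nonneg hb.le _), ← Real.rpow_mul hb.le]
    congr 1
    rw [neg_mul, div_mul_cancel₀ _ hq.ne']
  calc ((b ^ (β + α + 1) - a ^ (β + α + 1)) / (β + α + 1)) /
        ((b ^ (α + 1) - a ^ (α + 1)) / (α + 1)) *
      (((b ^ (-(β / (p - 1)) + α + 1) - a ^ (-(β / (p - 1)) + α + 1)) /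
        (-(β / (p - 1)) + α + 1)) / ((b ^ (α + 1) - a ^ (α + 1)) / (α + 1))) ^ (p - 1)
      ≤ (M1 * b ^ β) * (M2 ^ (p - 1) * b ^ (-β)) := by
        rw [← hexp]
        exact mul_le_mul f1' hstep2 (Real.rpow_nonneg hR2nn _) (by positivity)
    _ = M1 * M2 ^ (p - 1) * (b ^ β * b ^ (-β)) := by ring
    _ = M1 * M2 ^ (p - 1) := by
        rw [← Real.rpow_add hb, add_neg_cancel, Real.rpow_zero, mul_one]
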